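/- With μ = 0 and T*(k) as defined, max_{1 ≤ k ≤ N} T*(k) = T*(1) = T*(N) = Nσ·(1 - 1/(2N))^{N-1}·sqrt((1/(2N))·(1 - 1/(2N))). In particular, if each Xₙ is a two-point variable with β = Pr(Xₙ ≤ 0), mean 0, and variance σ², then E[ξ⁺] ≤ Nσ(1 - 1/(2N))^{N-1}·sqrt((1/(2N))(1 - 1/(2N))). -/

import Mathlib

open MeasureTheory ProbabilityTheory Real

/-- The local optimal value `T*(k)` of the piece-wise objective with zero mean. -/
noncomputable def Tstar (N : ℕ) (σ : ℝ) (k : ℕ) : ℝ :=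
  N * σ * ((N - 1).choose (k - 1) : ℝ)
    * ((2 * (k : ℝ) - 1) / (2 * N)) ^ (k - 1)
    * ((2 * (N : ℝ) - 2 * k + 1) / (2 * N)) ^ (N - k)
    * Real.sqrt (((2 * (k : ℝ) - 1) / (2 * N)) * ((2 * (N : ℝ) - 2 * k + 1) / (2 * N)))

section Aux

/-- `log y ≥ 2(y-1)/(y+1)` for `y ≥ 1`. -/
lemma log_ge_pade {y : ℝ} (hy : 1 ≤ y) : 2*(y-1)/(y+1) ≤ Real.log y := by
  have h0 : ∀ x ∈ Set.Ici (1:ℝ), 0 < x := fun x hx => lt_of_lt_of_le one_pos hx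
  set f : ℝ → ℝ := fun x => Real.log x - 2*(x-1)/(x+1) with hf
  have hmono : MonotoneOn f (Set.Ici 1) := by
    have hderiv : ∀ x ∈ Set.Ioi (1:ℝ), HasDerivAt f (x⁻¹ - 4/(x+1)^2) x := by
      intro x hx
      have hx0 : (0:ℝ) < x := lt_trans one_pos hx
      have h1 : HasDerivAt Real.log x⁻¹ x := Real.hasDerivAt_log (ne_of_gt hx0)
      have hx1 : x + 1 ≠ 0 := by positivity
      have h2 : HasDerivAt (fun x : ℝ => 2*(x-1)/(x+1)) (4/(x+1)^2) x := by
        have hnum : HasDerivAt (fun x : ℝ => 2*(x-1)) 2 x := by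
          simpa using ((hasDerivAt_id x).sub_const 1).const_mul 2
        have hden : HasDerivAt (fun x : ℝ => x + 1) 1 x := (hasDerivAt_id x).add_const 1
        have := hnum.div hden hx1
        exact this.congr_deriv (by ring)
      exact h1.sub h2
    apply monotoneOn_of_deriv_nonneg (convex_Ici 1)
    · apply ContinuousOn.sub (Real.continuousOn_log.mono ?_)
      · apply ContinuousOn.div (by fun_prop) (by fun_prop)
        intro x hx; have := h0 x hx; positivity
      · intro x hx; exact ne_of_gt (h0 x hx)
    · intro x hx
      rw [interior_Ici] at hx
      exact (hderiv x hx).differentiableAt.differentiableWithinAt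
    · intro x hx
      rw [interior_Ici] at hx
      rw [(hderiv x hx).deriv]
      have hx0 : (0:ℝ) < x := lt_trans one_pos hx
      rw [sub_nonneg, div_le_iff₀ (by positivity), inv_mul_eq_div, le_div_iff₀ hx0]
      nlinarith [sq_nonneg (x-1)]
  have := hmono (Set.mem_Ici.2 le_rfl) (Set.mem_Ici.2 hy) hy
  simp only [hf, Real.log_one] at this ⊢
  linarith [this]

/-- `h(x) = (x+2)log(x+2) - x log x - 2 log(x+1)` is monotone on `[1,∞)`. -/
lemma h_mono : MonotoneOn (fun x : ℝ => (x+2)*Real.log (x+2) - x*Real.log x - 2*Real.log (x+1))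
    (Set.Ici 1) := by
  have hderiv : ∀ x ∈ Set.Ioi (1:ℝ), HasDerivAt
      (fun x : ℝ => (x+2)*Real.log (x+2) - x*Real.log x - 2*Real.log (x+1))
      (Real.log (x+2) - Real.log x - 2/(x+1)) x := by
    intro x hx
    have hx0 : (0:ℝ) < x := lt_trans one_pos hx
    have h1 : HasDerivAt (fun x : ℝ => (x+2)*Real.log (x+2)) (Real.log (x+2) + 1) x := by
      have hl : HasDerivAt (fun x : ℝ => Real.log (x+2)) (x+2)⁻¹ x := by
        simpa [Function.comp_def] using (Real.hasDerivAt_log (by positivity : x+2 ≠ 0)).comp x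
          ((hasDerivAt_id x).add_const 2)
      have := (((hasDerivAt_id x).add_const 2).mul hl)
      exact this.congr_deriv (by rw [id_eq, mul_inv_cancel₀ (by positivity)]; ring)
    have h2 : HasDerivAt (fun x : ℝ => x*Real.log x) (Real.log x + 1) x := by
      have := (hasDerivAt_id x).mul (Real.hasDerivAt_log (ne_of_gt hx0))
      exact this.congr_deriv (by rw [id_eq, mul_inv_cancel₀ (ne_of_gt hx0)]; ring)
    have h3 : HasDerivAt (fun x : ℝ => 2*Real.log (x+1)) (2/(x+1)) x := by
      have hl : HasDerivAt (fun x : ℝ => Real.log (x+1)) (x+1)⁻¹ x := by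
        simpa [Function.comp_def] using (Real.hasDerivAt_log (by positivity : x+1 ≠ 0)).comp x
          ((hasDerivAt_id x).add_const 1)
      simpa [div_eq_mul_inv] using hl.const_mul 2
    exact ((h1.sub h2).sub h3).congr_deriv (by ring)
  apply monotoneOn_of_deriv_nonneg (convex_Ici 1)
  · intro x hx
    have hx0 : (0:ℝ) < x := lt_of_lt_of_le one_pos hx
    apply ContinuousAt.continuousWithinAt
    have c1 : ContinuousAt (fun x:ℝ => Real.log (x+2)) x :=
      (Real.continuousAt_log (by positivity)).comp (by fun_prop)
    have c2 : ContinuousAt Real.log x := Real.continuousAt_log (ne_of_gt hx0)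
    have c3 : ContinuousAt (fun x:ℝ => Real.log (x+1)) x :=
      (Real.continuousAt_log (by positivity)).comp (by fun_prop)
    exact (((continuousAt_id.add continuousAt_const).mul c1).sub
      (continuousAt_id.mul c2)).sub (continuousAt_const.mul c3)
  · intro x hx
    rw [interior_Ici] at hx
    exact (hderiv x hx).differentiableAt.differentiableWithinAt
  · intro x hx
    rw [interior_Ici] at hx
    rw [(hderiv x hx).deriv]
    have hx0 : (0:ℝ) < x := lt_trans one_pos hx
    have key := log_ge_pade (y := (x+2)/x) (by rw [le_div_iff₀ hx0]; linarith)
    rw [Real.log_div (by positivity) (ne_of_gt hx0)] at key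
    have : 2*((x+2)/x-1)/((x+2)/x+1) = 2/(x+1) := by
      field_simp
      ring
    rw [this] at key
    linarith

lemma dagger {A S : ℕ} (hA : 1 ≤ A) (hAS : A ≤ S) :
    (S:ℝ)^S * ((S:ℝ)+1)^2 * ((A:ℝ)+2)^(A+2) ≤ ((S:ℝ)+2)^(S+2) * ((A:ℝ)+1)^2 * (A:ℝ)^A := by
  have ha : (1:ℝ) ≤ (A:ℝ) := by exact_mod_cast hA
  have hs : (A:ℝ) ≤ (S:ℝ) := by exact_mod_cast hAS
  have ha0 : (0:ℝ) < A := lt_of_lt_of_le one_pos ha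
  have hs0 : (0:ℝ) < S := lt_of_lt_of_le ha0 hs
  have hkey := h_mono (Set.mem_Ici.2 ha) (Set.mem_Ici.2 (le_trans ha hs)) hs
  simp only at hkey
  have hL : (0:ℝ) < (S:ℝ)^S * ((S:ℝ)+1)^2 * ((A:ℝ)+2)^(A+2) := by positivity
  have hR : (0:ℝ) < ((S:ℝ)+2)^(S+2) * ((A:ℝ)+1)^2 * (A:ℝ)^A := by positivity
  rw [← Real.log_le_log_iff hL hR]
  rw [Real.log_mul (by positivity) (by positivity), Real.log_mul (by positivity) (by positivity),
    Real.log_mul (by positivity) (by positivity), Real.log_mul (by positivity) (by positivity),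
    Real.log_pow]
  simp only [Real.log_pow]
  push_cast
  linarith

lemma starstar (m j : ℕ) :
    ((m+j).choose m : ℝ)^2 * (2*(m:ℝ)+1)^(2*m+1) * (2*(j:ℝ)+1)^(2*j+1)
      ≤ (2*(m:ℝ)+2*(j:ℝ)+1)^(2*(m+j)+1) := by
  induction m with
  | zero => simp
  | succ m ih =>
    have key := dagger (A := 2*m+1) (S := 2*m+2*j+1) (by omega) (by omega)
    push_cast at key
    have hc : ((m+1+j).choose (m+1) : ℝ) * ((m:ℝ)+1) = ((m:ℝ)+(j:ℝ)+1) * ((m+j).choose m : ℝ) := by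
      have h2 : (m+j+1) * ((m+j).choose m) = ((m+1+j).choose (m+1)) * (m+1) := by
        have := Nat.add_one_mul_choose_eq (m+j) m
        simpa [Nat.succ_eq_add_one, show m+1+j = m+j+1 by omega] using this
      have hc' := congrArg (Nat.cast : ℕ → ℝ) h2
      push_cast at hc'
      linarith
    set c : ℝ := ((m+j).choose m : ℝ) with hcdef
    set c' : ℝ := ((m+1+j).choose (m+1) : ℝ) with hcdef'
    set a : ℝ := 2*(m:ℝ)+1 with hadef
    set s : ℝ := 2*(m:ℝ)+2*(j:ℝ)+1 with hsdef
    set jj : ℝ := 2*(j:ℝ)+1 with hjdef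
    -- rewrite goal in terms of a, s
    have e1 : 2*(m+1)+1 = 2*m+1+2 := by ring
    have e2 : 2*(m+1+j)+1 = 2*m+2*j+1+2 := by omega
    have goal_eq : ((m+1+j).choose (m+1) : ℝ)^2 * (2*((m:ℝ)+1)+1)^(2*(m+1)+1) * jj^(2*j+1)
        = c'^2 * (a+2)^(2*m+1+2) * jj^(2*j+1) := by
      rw [e1]; push_cast; ring
    have goal_eq2 : (2*((m:ℝ)+1)+2*(j:ℝ)+1)^(2*(m+1+j)+1) = (s+2)^(2*m+2*j+1+2) := by
      rw [e2]; push_cast; ring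
    push_cast
    rw [goal_eq, goal_eq2]
    have e0 : 2*(m+j)+1 = 2*m+2*j+1 := by ring
    rw [e0] at ih
    -- main chain
    have hposr : (0:ℝ) ≤ (s+1)^2 * (a+2)^(2*m+1+2) := by positivity
    have step1 : c^2 * a^(2*m+1) * jj^(2*j+1) * ((s+1)^2 * (a+2)^(2*m+1+2))
        ≤ s^(2*m+2*j+1) * ((s+1)^2 * (a+2)^(2*m+1+2)) :=
      mul_le_mul_of_nonneg_right ih hposr
    have step2 : s^(2*m+2*j+1) * ((s+1)^2 * (a+2)^(2*m+1+2))
        ≤ (s+2)^(2*m+2*j+1+2) * ((a+1)^2 * a^(2*m+1)) := by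
      have h2 : (2*(m:ℝ)+1+2) = a + 2 := by rw [hadef]
      have h3 : (2*(m:ℝ)+2*(j:ℝ)+1+1) = s + 1 := by rw [hsdef]
      have h4 : (2*(m:ℝ)+2*(j:ℝ)+1+2) = s + 2 := by rw [hsdef]
      calc s^(2*m+2*j+1) * ((s+1)^2 * (a+2)^(2*m+1+2))
          = s^(2*m+2*j+1) * (s+1)^2 * (a+2)^(2*m+1+2) := by ring
        _ ≤ (s+2)^(2*m+2*j+1+2) * (a+1)^2 * a^(2*m+1) := by
            rw [hadef, hsdef] at *
            convert key using 2 <;> ring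
        _ = (s+2)^(2*m+2*j+1+2) * ((a+1)^2 * a^(2*m+1)) := by ring
    have hcc : c^2 * (s+1)^2 = c'^2 * (a+1)^2 := by
      have h5 : s + 1 = 2*((m:ℝ)+(j:ℝ)+1) := by rw [hsdef]; ring
      have h6 : a + 1 = 2*((m:ℝ)+1) := by rw [hadef]; ring
      rw [h5, h6]
      have h7 : c' * ((m:ℝ)+1) = ((m:ℝ)+(j:ℝ)+1) * c := hc
      linear_combination (-4*(c'*((m:ℝ)+1) + ((m:ℝ)+(j:ℝ)+1)*c)) * h7
    have lhs_eq : (c'^2 * (a+2)^(2*m+1+2) * jj^(2*j+1)) * ((a+1)^2 * a^(2*m+1))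
        = c^2 * a^(2*m+1) * jj^(2*j+1) * ((s+1)^2 * (a+2)^(2*m+1+2)) := by
      linear_combination (a^(2*m+1) * jj^(2*j+1) * (a+2)^(2*m+1+2)) * hcc.symm
    have hP : (0:ℝ) < (a+1)^2 * a^(2*m+1) := by positivity
    rw [← mul_le_mul_iff_of_pos_right hP, lhs_eq]
    exact step1.trans step2

/-- binomial partial-sum telescoping identity. -/
lemma telescope (N : ℕ) (p : ℝ) : ∀ d : ℕ, d ≤ N →
    ∑ j ∈ Finset.Ico (N-d) (N+1), ((j:ℝ) - N*p) * (N.choose j : ℝ) * p^j * (1-p)^(N-j)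
      = ((N-d : ℕ):ℝ) * (1-p) * (N.choose (N-d) : ℝ) * p^(N-d) * (1-p)^(N-(N-d)) := by
  intro d
  induction d with
  | zero =>
    intro _
    simp only [Nat.sub_zero, Nat.sub_self]
    rw [show Finset.Ico N (N+1) = {N} from by rw [Finset.Ico_add_one_right_eq_Icc, Finset.Icc_self],
      Finset.sum_singleton, Nat.choose_self]
    push_cast
    ring_nf
    simp [Nat.sub_self]
  | succ d ih =>
    intro hd
    have hd' : d ≤ N := le_of_lt (Nat.lt_of_lt_of_le (Nat.lt_succ_self d) hd)
    have hm1 : (N - (d+1)) + 1 = N - d := by omega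
    have hmN : N - (d+1) < N := by omega
    rw [Finset.sum_eq_sum_Ico_succ_bot (by omega : N - (d+1) < N+1), hm1, ih hd']
    -- now pure algebra
    set m := N - (d+1) with hmdef
    have hNd : N - d = m + 1 := hm1.symm
    rw [hNd]
    have hchoose : (N.choose (m+1) : ℝ) * (m+1) = (N.choose m : ℝ) * ((N:ℝ) - m) := by
      have h := Nat.choose_succ_right_eq N m
      have h2 := congrArg (Nat.cast : ℕ → ℝ) h
      push_cast [Nat.cast_sub (le_of_lt hmN)] at h2
      linarith
    have hexp1 : N - m = (N - (m+1)) + 1 := by omega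
    have hexp2 : p^(m+1) = p^m * p := pow_succ p m
    rw [hexp1, pow_succ, hexp2]
    push_cast
    linear_combination ((1-p)^(N-(m+1)) * p^m * (1-p) * p) * hchoose

/-- `t^a (1-t)^b` is maximized at `t = a/(a+b)`. -/
lemma pow_prob_le (a b : ℕ) (ha : 1 ≤ a) (hb : 1 ≤ b) {t : ℝ} (ht0 : 0 < t) (ht1 : t < 1) :
    t^a * (1-t)^b ≤ ((a:ℝ)/((a:ℝ)+(b:ℝ)))^a * ((b:ℝ)/((a:ℝ)+(b:ℝ)))^b := by
  have ha' : (1:ℝ) ≤ (a:ℝ) := by exact_mod_cast ha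
  have hb' : (1:ℝ) ≤ (b:ℝ) := by exact_mod_cast hb
  have hab : (0:ℝ) < (a:ℝ)+(b:ℝ) := by linarith
  set α : ℝ := (a:ℝ)/((a:ℝ)+(b:ℝ)) with hα
  set β : ℝ := (b:ℝ)/((a:ℝ)+(b:ℝ)) with hβ
  have hα0 : 0 < α := by positivity
  have hβ0 : 0 < β := by positivity
  have h1t : 0 < 1 - t := by linarith
  have hlog : (a:ℝ) * Real.log t + (b:ℝ) * Real.log (1-t)
      ≤ (a:ℝ) * Real.log α + (b:ℝ) * Real.log β := by
    have k1 : Real.log t - Real.log α ≤ t/α - 1 := by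
      rw [← Real.log_div (ne_of_gt ht0) (ne_of_gt hα0)]
      exact Real.log_le_sub_one_of_pos (by positivity)
    have k2 : Real.log (1-t) - Real.log β ≤ (1-t)/β - 1 := by
      rw [← Real.log_div (ne_of_gt h1t) (ne_of_gt hβ0)]
      exact Real.log_le_sub_one_of_pos (by positivity)
    have e1 : (a:ℝ) * (t/α - 1) + (b:ℝ) * ((1-t)/β - 1) = 0 := by
      rw [hα, hβ]
      field_simp
      ring
    nlinarith [mul_le_mul_of_nonneg_left k1 (by linarith : (0:ℝ) ≤ (a:ℝ)),
      mul_le_mul_of_nonneg_left k2 (by linarith : (0:ℝ) ≤ (b:ℝ))]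
  calc t^a * (1-t)^b = Real.exp ((a:ℝ) * Real.log t + (b:ℝ) * Real.log (1-t)) := by
        rw [Real.exp_add, ← Real.log_pow, ← Real.log_pow, Real.exp_log (by positivity),
          Real.exp_log (by positivity)]
    _ ≤ Real.exp ((a:ℝ) * Real.log α + (b:ℝ) * Real.log β) := Real.exp_le_exp.2 hlog
    _ = α^a * β^b := by
        rw [Real.exp_add, ← Real.log_pow, ← Real.log_pow, Real.exp_log (by positivity),
          Real.exp_log (by positivity)]

lemma Tstar_nonneg (N : ℕ) (σ : ℝ) (hσ : 0 ≤ σ) (k : ℕ) (hk1 : 1 ≤ k) (hkN : k ≤ N) :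
    0 ≤ Tstar N σ k := by
  have hk : (1:ℝ) ≤ (k:ℝ) := by exact_mod_cast hk1
  have hkN' : (k:ℝ) ≤ (N:ℝ) := by exact_mod_cast hkN
  have hα : (0:ℝ) ≤ (2 * (k : ℝ) - 1) / (2 * N) := by
    apply div_nonneg (by linarith) (by positivity)
  have hβ : (0:ℝ) ≤ (2 * (N : ℝ) - 2 * k + 1) / (2 * N) := by
    apply div_nonneg (by linarith) (by positivity)
  unfold Tstar
  have : (0:ℝ) ≤ (N:ℝ) := Nat.cast_nonneg N
  positivity

lemma Tstar_sq (N : ℕ) (hN : 1 ≤ N) (σ : ℝ) (k : ℕ) (hk1 : 1 ≤ k) (hkN : k ≤ N) :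
    (Tstar N σ k)^2 = (N:ℝ)^2 * σ^2 * ((N-1).choose (k-1) : ℝ)^2
      * (2*(k:ℝ)-1)^(2*(k-1)+1) * (2*(N:ℝ)-2*(k:ℝ)+1)^(2*(N-k)+1) / (2*(N:ℝ))^(2*N) := by
  have hk : (1:ℝ) ≤ (k:ℝ) := by exact_mod_cast hk1
  have hkN' : (k:ℝ) ≤ (N:ℝ) := by exact_mod_cast hkN
  have hN0 : (0:ℝ) < (N:ℝ) := by exact_mod_cast hN
  have hα : (0:ℝ) ≤ (2 * (k : ℝ) - 1) / (2 * N) := by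
    apply div_nonneg (by linarith) (by positivity)
  have hβ : (0:ℝ) ≤ (2 * (N : ℝ) - 2 * k + 1) / (2 * N) := by
    apply div_nonneg (by linarith) (by positivity)
  unfold Tstar
  rw [mul_pow, mul_pow, mul_pow, mul_pow, Real.sq_sqrt (mul_nonneg hα hβ)]
  rw [div_pow, div_pow]
  have h2N : (2*(N:ℝ)) ≠ 0 := by positivity
  have hexp : 2*N = (2*(k-1)+1) + (2*(N-k)+1) := by omega
  rw [hexp, pow_add]
  simp only [div_pow, mul_pow]
  ring

lemma Tstar_le_one (N : ℕ) (hN : 1 ≤ N) (σ : ℝ) (hσ : 0 ≤ σ) (k : ℕ) (hk1 : 1 ≤ k)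
    (hkN : k ≤ N) : Tstar N σ k ≤ Tstar N σ 1 := by
  have h1 : 0 ≤ Tstar N σ k := Tstar_nonneg N σ hσ k hk1 hkN
  have h2 : 0 ≤ Tstar N σ 1 := Tstar_nonneg N σ hσ 1 le_rfl hN
  have hsq : (Tstar N σ k)^2 ≤ (Tstar N σ 1)^2 := by
    rw [Tstar_sq N hN σ k hk1 hkN, Tstar_sq N hN σ 1 le_rfl hN]
    apply div_le_div_of_nonneg_right ?_ (by positivity)
    · push_cast
      have key := starstar (k-1) (N-k)
      have hmj : (k-1) + (N-k) = N-1 := by omega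
      rw [hmj] at key
      have hc1 : (2*((k-1:ℕ):ℝ)+1) = 2*(k:ℝ)-1 := by
        have : ((k-1:ℕ):ℝ) = (k:ℝ)-1 := by
          push_cast [Nat.cast_sub hk1]; ring
        rw [this]; ring
      have hc2 : (2*((N-k:ℕ):ℝ)+1) = 2*(N:ℝ)-2*(k:ℝ)+1 := by
        have : ((N-k:ℕ):ℝ) = (N:ℝ)-(k:ℝ) := by
          push_cast [Nat.cast_sub hkN]; ring
        rw [this]; ring
      have hc3 : (2*((k-1:ℕ):ℝ)+2*((N-k:ℕ):ℝ)+1) = 2*(N:ℝ)-1 := by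
        rw [Nat.cast_sub hk1, Nat.cast_sub hkN]; push_cast; ring
      rw [hc1, hc2, hc3] at key
      -- goal : N² σ² C² (2k-1)^(2(k-1)+1) (2N-2k+1)^(2(N-k)+1) ≤ N² σ² 1 (2·1-1)^(2·0+1) (2N-2+1)^(2(N-1)+1)
      have e1 : ((N-1).choose (1-1) : ℝ) = 1 := by norm_num
      have e2 : (2*(1:ℝ)-1) = 1 := by norm_num
      calc (N:ℝ)^2 * σ^2 * ((N-1).choose (k-1) : ℝ)^2 * (2*(k:ℝ)-1)^(2*(k-1)+1)
            * (2*(N:ℝ)-2*(k:ℝ)+1)^(2*(N-k)+1)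
          = (N:ℝ)^2 * σ^2 * (((N-1).choose (k-1) : ℝ)^2 * (2*(k:ℝ)-1)^(2*(k-1)+1)
            * (2*(N:ℝ)-2*(k:ℝ)+1)^(2*(N-k)+1)) := by ring
        _ ≤ (N:ℝ)^2 * σ^2 * ((2*(N:ℝ)-1)^(2*(N-1)+1)) := by
            apply mul_le_mul_of_nonneg_left key (by positivity)
        _ = (N:ℝ)^2 * σ^2 * ((N-1).choose (1-1) : ℝ)^2 * (2*(1:ℝ)-1)^(2*(1-1)+1)
            * (2*(N:ℝ)-2*(1:ℝ)+1)^(2*(N-1)+1) := by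
            rw [e1]
            have h9 : (2*(N:ℝ) - 2*1 + 1) = 2*(N:ℝ) - 1 := by ring
            rw [h9]
            norm_num
  calc Tstar N σ k = Real.sqrt ((Tstar N σ k)^2) := (Real.sqrt_sq h1).symm
    _ ≤ Real.sqrt ((Tstar N σ 1)^2) := Real.sqrt_le_sqrt hsq
    _ = Tstar N σ 1 := Real.sqrt_sq h2

lemma Tstar_one_eq (N : ℕ) (hN : 1 ≤ N) (σ : ℝ) :
    Tstar N σ 1 = N * σ * (1 - 1/(2*(N:ℝ)))^(N-1) * Real.sqrt ((1/(2*(N:ℝ))) * (1 - 1/(2*(N:ℝ)))) := by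
  have hN0 : (0:ℝ) < (N:ℝ) := by exact_mod_cast hN
  have h1 : (2*(1:ℝ)-1) / (2*(N:ℝ)) = 1/(2*(N:ℝ)) := by norm_num
  have h2 : (2*(N:ℝ)-2*(1:ℝ)+1) / (2*(N:ℝ)) = 1 - 1/(2*(N:ℝ)) := by
    field_simp; ring
  unfold Tstar
  push_cast
  rw [h1, h2]
  norm_num

lemma Tstar_N_eq (N : ℕ) (hN : 1 ≤ N) (σ : ℝ) : Tstar N σ 1 = Tstar N σ N := by
  have hN0 : (0:ℝ) < (N:ℝ) := by exact_mod_cast hN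
  have h2 : (2*(N:ℝ)-2*(N:ℝ)+1) / (2*(N:ℝ)) = 1/(2*(N:ℝ)) := by ring_nf
  rw [Tstar_one_eq N hN σ]
  unfold Tstar
  rw [h2, Nat.sub_self, Nat.choose_self, pow_zero]
  have h3 : (2*(N:ℝ)-1) / (2*(N:ℝ)) = 1 - 1/(2*(N:ℝ)) := by field_simp
  rw [h3, mul_comm (1/(2*(N:ℝ))) (1 - 1/(2*(N:ℝ)))]
  push_cast
  ring


section ProbAux
variable {Ω : Type*} [MeasureSpace Ω] [IsProbabilityMeasure (ℙ : Measure Ω)]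

/-- Integral of `f ∘ Y` for a two-valued random variable. -/
lemma two_point_integral {Y : Ω → ℝ} (hY : Measurable Y) {a b : ℝ} (hab : a ≠ b)
    (hval : ∀ ω, Y ω = a ∨ Y ω = b) (f : ℝ → ℝ) :
    ∫ ω, f (Y ω) ∂ℙ = f a * (ℙ (Y ⁻¹' {a})).toReal + f b * (ℙ (Y ⁻¹' {b})).toReal := by
  have hsa : MeasurableSet (Y ⁻¹' {a}) := hY (measurableSet_singleton a)
  have hsb : MeasurableSet (Y ⁻¹' {b}) := hY (measurableSet_singleton b)
  have hfun : (fun ω => f (Y ω)) = fun ω =>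
      Set.indicator (Y ⁻¹' {a}) (fun _ => f a) ω + Set.indicator (Y ⁻¹' {b}) (fun _ => f b) ω := by
    funext ω
    rcases hval ω with h | h
    · rw [Set.indicator_of_mem (by simp [h]), Set.indicator_of_notMem (by simp [h, hab])]
      simp [h]
    · rw [Set.indicator_of_notMem (by simp [h]; exact fun hc => hab hc.symm),
        Set.indicator_of_mem (by simp [h])]
      simp [h]
  rw [hfun, integral_add ((integrable_const (f a)).indicator hsa)
    ((integrable_const (f b)).indicator hsb),
    integral_indicator_const _ hsa, integral_indicator_const _ hsb]
  simp [mul_comm, measureReal_def]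

lemma two_point_prob_sum {Y : Ω → ℝ} (hY : Measurable Y) {a b : ℝ} (hab : a ≠ b)
    (hval : ∀ ω, Y ω = a ∨ Y ω = b) :
    (ℙ (Y ⁻¹' {a})).toReal + (ℙ (Y ⁻¹' {b})).toReal = 1 := by
  have := two_point_integral hY hab hval (fun _ => 1)
  simpa using this.symm

lemma two_point_memℒp {Y : Ω → ℝ} (hY : Measurable Y) {a b : ℝ}
    (hval : ∀ ω, Y ω = a ∨ Y ω = b) : MemLp Y 2 ℙ := by
  apply MemLp.of_bound hY.aestronglyMeasurable (max |a| |b|)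
  filter_upwards with ω
  rcases hval ω with h | h <;> rw [h]
  · exact le_max_of_le_left le_rfl
  · exact le_max_of_le_right le_rfl

theorem expected_loss_le (N : ℕ) (hN : 1 ≤ N) (σ : ℝ) (hσ : 0 < σ)
    (X : Fin N → Ω → ℝ) (L H : ℝ) (hL : L ≤ 0) (hH : 0 < H)
    (hmeas : ∀ n, Measurable (X n))
    (htwo : ∀ n, ∀ ω, X n ω = L ∨ X n ω = H)
    (hindep : iIndepFun X ℙ)
    (hident : ∀ n m, IdentDistrib (X n) (X m) ℙ ℙ)
    (hmean : ∀ n, ∫ ω, X n ω ∂ℙ = 0)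
    (hvar : ∀ n, variance (X n) ℙ = σ ^ 2) :
    ∫ ω, max (∑ n, X n ω) 0 ∂ℙ ≤ Tstar N σ 1 := by
  classical
  have hN0 : (0:ℝ) < (N:ℝ) := by exact_mod_cast hN
  set i0 : Fin N := ⟨0, hN⟩ with hi0
  have hLH : L ≠ H := fun h => absurd hH (not_lt.2 (h ▸ hL))
  set p : ℝ := (ℙ ((X i0) ⁻¹' {H})).toReal with hpdef
  set q : ℝ := (ℙ ((X i0) ⁻¹' {L})).toReal with hqdef
  have hpn : ∀ n, (ℙ ((X n) ⁻¹' {H})).toReal = p := by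
    intro n
    rw [hpdef, (hident n i0).measure_mem_eq (measurableSet_singleton H)]
  have hqn : ∀ n, (ℙ ((X n) ⁻¹' {L})).toReal = q := by
    intro n
    rw [hqdef, (hident n i0).measure_mem_eq (measurableSet_singleton L)]
  have hsum1 : q + p = 1 := two_point_prob_sum (hmeas i0) hLH (htwo i0)
  have hq1p : q = 1 - p := by linarith
  have hmean0 : L * q + H * p = 0 := by
    have h := two_point_integral (hmeas i0) hLH (htwo i0) (fun x => x)
    rw [← hpdef, ← hqdef] at h
    rw [← h, hmean i0]
  have hvar0 : L^2 * q + H^2 * p = σ^2 := by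
    have hml2 := two_point_memℒp (hmeas i0) (htwo i0)
    have hv := variance_eq_sub hml2
    rw [hvar i0] at hv
    have h2 := two_point_integral (hmeas i0) hLH (htwo i0) (fun x => x^2)
    simp only [← hpdef, ← hqdef] at h2
    simp only [Pi.pow_apply] at hv
    rw [hmean i0] at hv
    rw [h2] at hv
    linarith
  have hp0 : 0 ≤ p := ENNReal.toReal_nonneg
  have hq0 : 0 ≤ q := ENNReal.toReal_nonneg
  have hppos : 0 < p := by
    rcases lt_or_eq_of_le hp0 with h | h
    · exact h
    · exfalso
      have hq1 : q = 1 := by linarith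
      have hL0 : L = 0 := by
        rw [← h, hq1] at hmean0; linarith
      rw [← h, hq1, hL0] at hvar0
      nlinarith
  have hqpos : 0 < q := by
    rcases lt_or_eq_of_le hq0 with h | h
    · exact h
    · exfalso
      have hp1 : p = 1 := by linarith
      rw [← h, hp1] at hmean0
      nlinarith
  have hp1 : p < 1 := by linarith
  set D : ℝ := H - L with hDdef
  have hD : 0 < D := by rw [hDdef]; linarith
  have hLD : L = -(D*p) := by
    rw [hq1p] at hmean0
    rw [hDdef]
    linear_combination hmean0
  have hHD : H = D*q := by
    rw [hDdef, hq1p]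
    rw [hq1p] at hmean0
    linear_combination hmean0
  have hNL : (N:ℝ)*L = -((N:ℝ)*D*p) := by rw [hLD]; ring
  have hpq0 : (0:ℝ) ≤ p*q := by positivity
  have hDpq : D^2 * (p*q) = σ^2 := by
    rw [← hvar0, hLD, hHD]
    linear_combination (-(D^2*p*q))*hsum1
  have hsqrtD : p*q*D = Real.sqrt (p*q) * σ := by
    have h1 : Real.sqrt (p*q) * Real.sqrt (p*q) = p*q := Real.mul_self_sqrt hpq0
    have h2 : Real.sqrt (D^2 * (p*q)) = D * Real.sqrt (p*q) := by
      rw [Real.sqrt_mul (sq_nonneg D), Real.sqrt_sq hD.le]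
    have h3 : Real.sqrt (D^2 * (p*q)) = σ := by rw [hDpq, Real.sqrt_sq hσ.le]
    calc p*q*D = Real.sqrt (p*q) * (Real.sqrt (p*q) * D) := by rw [← mul_assoc, h1]
      _ = Real.sqrt (p*q) * σ := by rw [← h3, h2]; ring
  -- atoms
  set e : Finset (Fin N) → Fin N → ℝ := fun s n => if n ∈ s then H else L with hedef
  set A : Finset (Fin N) → Set Ω := fun s => ⋂ n, (X n)⁻¹' {e s n} with hAdef
  have hAmeas : ∀ s, MeasurableSet (A s) :=
    fun s => MeasurableSet.iInter (fun n => hmeas n (measurableSet_singleton _))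
  have hmeasA : ∀ s : Finset (Fin N), (ℙ (A s)).toReal = p^(s.card) * q^(N - s.card) := by
    intro s
    have hPi := hindep.meas_iInter (s := fun n => (X n)⁻¹' {e s n})
      (fun n => ⟨{e s n}, measurableSet_singleton _, rfl⟩)
    rw [hAdef]
    simp only []
    rw [hPi, ENNReal.toReal_prod]
    have hfac : ∀ n, (ℙ ((X n)⁻¹' {e s n})).toReal = if n ∈ s then p else q := by
      intro n; by_cases hn : n ∈ s
      · simp only [hedef, hn, if_true]; exact hpn n
      · simp only [hedef, hn, if_false]; exact hqn n
    rw [Finset.prod_congr rfl (fun n _ => hfac n), Finset.prod_ite]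
    have h1 : Finset.univ.filter (fun n : Fin N => n ∈ s) = s := by ext n; simp
    have h2 : Finset.univ.filter (fun n : Fin N => ¬ n ∈ s) = sᶜ := by ext n; simp
    rw [h1, h2, Finset.prod_const, Finset.prod_const, Finset.card_compl, Fintype.card_fin]
  have hpoint : (fun ω => max (∑ n, X n ω) 0)
      = fun ω => ∑ s : Finset (Fin N),
          (A s).indicator (fun _ => max ((s.card:ℝ)*D + N*L) 0) ω := by
    funext ω
    set t : Finset (Fin N) := Finset.univ.filter (fun n => X n ω = H) with htdef
    have hmemt : ω ∈ A t := by
      rw [hAdef]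
      simp only [Set.mem_iInter]
      intro n
      simp only [Set.mem_preimage, Set.mem_singleton_iff, hedef]
      by_cases hn : X n ω = H
      · rw [if_pos (by simp [htdef, hn])]; exact hn
      · rw [if_neg (by simp [htdef, hn])]
        rcases htwo n ω with h | h
        · exact h
        · exact absurd h hn
    have huniq : ∀ s : Finset (Fin N), s ≠ t → ω ∉ A s := by
      intro s hst hmem
      apply hst
      rw [hAdef] at hmem
      simp only [Set.mem_iInter, Set.mem_preimage, Set.mem_singleton_iff] at hmem
      ext n
      have := hmem n
      simp only [hedef] at this
      simp only [htdef, Finset.mem_filter, Finset.mem_univ, true_and]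
      constructor
      · intro hn; rw [if_pos hn] at this; exact this
      · intro hXn
        by_contra hn
        rw [if_neg hn] at this
        exact hLH (this.symm.trans hXn)
    rw [Finset.sum_eq_single_of_mem t (Finset.mem_univ t)
      (fun s _ hst => Set.indicator_of_notMem (huniq s hst) _),
      Set.indicator_of_mem hmemt]
    congr 1
    have : ∀ n, X n ω = L + (if n ∈ t then D else 0) := by
      intro n
      by_cases hn : n ∈ t
      · rw [if_pos hn]
        have : X n ω = H := by simpa [htdef] using hn
        rw [this, hDdef]; ring
      · rw [if_neg hn]
        have hnH : ¬ X n ω = H := by simpa [htdef] using hn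
        rcases htwo n ω with h | h
        · rw [h]; ring
        · exact absurd h hnH
    rw [Finset.sum_congr rfl (fun n _ => this n), Finset.sum_add_distrib,
      Finset.sum_const, Finset.sum_ite_mem, Finset.univ_inter, Finset.sum_const]
    simp only [Finset.card_univ, Fintype.card_fin, nsmul_eq_mul]
    push_cast
    ring
  have hint : ∫ ω, max (∑ n, X n ω) 0 ∂ℙ
      = ∑ s : Finset (Fin N), max ((s.card:ℝ)*D + N*L) 0 * (p^(s.card) * q^(N - s.card)) := by
    rw [hpoint, integral_finset_sum _
      (fun s _ => (integrable_const _).indicator (hAmeas s))]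
    refine Finset.sum_congr rfl (fun s _ => ?_)
    rw [integral_indicator_const _ (hAmeas s), measureReal_def, hmeasA s, smul_eq_mul, mul_comm]
  have hgroup : (∑ s : Finset (Fin N),
        max ((s.card:ℝ)*D + N*L) 0 * (p^(s.card) * q^(N - s.card)))
      = ∑ j ∈ Finset.range (N+1),
          (N.choose j) • (max ((j:ℝ)*D + N*L) 0 * (p^j * q^(N-j))) := by
    have hps := Finset.sum_powerset_apply_card
      (f := fun m => max ((m:ℝ)*D + (N:ℝ)*L) 0 * (p^m * q^(N-m)))
      (x := (Finset.univ : Finset (Fin N)))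
    rw [Finset.powerset_univ, Finset.card_univ, Fintype.card_fin] at hps
    exact hps
  have hmax : ∀ j : ℕ, max ((j:ℝ)*D + N*L) 0 = D * max ((j:ℝ) - N*p) 0 := by
    intro j
    rw [mul_max_of_nonneg _ _ hD.le, mul_zero]
    congr 1
    rw [hNL]; ring
  set ν : ℕ := Nat.floor ((N:ℝ)*p) + 1 with hνdef
  have hν1 : 1 ≤ ν := Nat.le_add_left 1 _
  have hNp0 : (0:ℝ) ≤ (N:ℝ)*p := by positivity
  have hfloor_le : ((Nat.floor ((N:ℝ)*p) : ℕ):ℝ) ≤ (N:ℝ)*p := Nat.floor_le hNp0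
  have hup : (N:ℝ)*p < (ν:ℝ) := by
    have h := Nat.lt_floor_add_one ((N:ℝ)*p)
    rw [hνdef]
    push_cast
    push_cast at h
    linarith
  have hνN : ν ≤ N := by
    have h1 : Nat.floor ((N:ℝ)*p) < N := by
      rw [Nat.floor_lt hNp0]
      nlinarith
    omega
  clear_value ν
  have hsplit : (∑ j ∈ Finset.range (N+1),
        (N.choose j) • (max ((j:ℝ)*D + N*L) 0 * (p^j * q^(N-j))))
      = D * (∑ j ∈ Finset.Ico ν (N+1),
          ((j:ℝ) - N*p) * (N.choose j : ℝ) * p^j * (1-p)^(N-j)) := by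
    rw [Finset.range_eq_Ico,
      ← Finset.sum_Ico_consecutive _ (Nat.zero_le ν) (by omega : ν ≤ N+1)]
    have hzero : (∑ j ∈ Finset.Ico 0 ν,
        (N.choose j) • (max ((j:ℝ)*D + N*L) 0 * (p^j * q^(N-j)))) = 0 := by
      apply Finset.sum_eq_zero
      intro j hj
      have hj' : j < ν := (Finset.mem_Ico.1 hj).2
      have hjle : (j:ℝ) ≤ (N:ℝ)*p := by
        have h2 : j ≤ Nat.floor ((N:ℝ)*p) := by omega
        calc (j:ℝ) ≤ (Nat.floor ((N:ℝ)*p) : ℝ) := by exact_mod_cast h2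
          _ ≤ _ := hfloor_le
      rw [hmax j, max_eq_right (by linarith)]
      simp
    rw [hzero, zero_add, Finset.mul_sum]
    apply Finset.sum_congr rfl
    intro j hj
    have hj' : ν ≤ j := (Finset.mem_Ico.1 hj).1
    have hjp : (N:ℝ)*p ≤ (j:ℝ) := by
      have h3 : (ν:ℝ) ≤ (j:ℝ) := by exact_mod_cast hj'
      linarith
    rw [hmax j, max_eq_left (by linarith), ← hq1p, nsmul_eq_mul]
    ring
  have htel := telescope N p (N - ν) (by omega)
  have hNν : N - (N - ν) = ν := by omega
  rw [hNν] at htel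
  rw [hint, hgroup, hsplit, htel]
  -- now pure inequality
  set C : ℝ := (N.choose ν : ℝ) with hCdef
  set αν : ℝ := (2*(ν:ℝ)-1)/(2*(N:ℝ)) with hανdef
  set βν : ℝ := (2*(N:ℝ)-2*(ν:ℝ)+1)/(2*(N:ℝ)) with hβνdef
  have hν' : ν = (ν-1)+1 := by omega
  have hEeq : D * ((ν:ℝ)*(1-p)*C*p^ν*(1-p)^(N-ν))
      = σ * ((ν:ℝ)*C) * (p^(ν-1) * q^(N-ν) * Real.sqrt (p*q)) := by
    rw [← hq1p]
    have hpν : p^ν = p^(ν-1)*p := by nth_rewrite 1 [hν']; rw [pow_succ]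
    rw [hpν]
    linear_combination ((ν:ℝ)*C*q^(N-ν)*p^(ν-1)) * hsqrtD
  rw [hEeq]
  have hνR : (1:ℝ) ≤ (ν:ℝ) := by exact_mod_cast hν1
  have hνNR : (ν:ℝ) ≤ (N:ℝ) := by exact_mod_cast hνN
  have hαν0 : 0 ≤ αν := by
    rw [hανdef]; apply div_nonneg (by linarith) (by positivity)
  have hβν0 : 0 ≤ βν := by
    rw [hβνdef]; apply div_nonneg (by linarith) (by positivity)
  have hkey : p^(ν-1) * q^(N-ν) * Real.sqrt (p*q)
      ≤ αν^(ν-1) * βν^(N-ν) * Real.sqrt (αν*βν) := by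
    have hL0 : 0 ≤ p^(ν-1) * q^(N-ν) * Real.sqrt (p*q) :=
      mul_nonneg (mul_nonneg (pow_nonneg hp0 _) (pow_nonneg hq0 _)) (Real.sqrt_nonneg _)
    have hR0 : 0 ≤ αν^(ν-1) * βν^(N-ν) * Real.sqrt (αν*βν) :=
      mul_nonneg (mul_nonneg (pow_nonneg hαν0 _) (pow_nonneg hβν0 _)) (Real.sqrt_nonneg _)
    have hsq : (p^(ν-1) * q^(N-ν) * Real.sqrt (p*q))^2
        ≤ (αν^(ν-1) * βν^(N-ν) * Real.sqrt (αν*βν))^2 := by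
      rw [mul_pow, mul_pow, mul_pow, mul_pow, Real.sq_sqrt hpq0,
        Real.sq_sqrt (mul_nonneg hαν0 hβν0)]
      have ha : 1 ≤ 2*(ν-1)+1 := by omega
      have hb : 1 ≤ 2*(N-ν)+1 := by omega
      have hpp := pow_prob_le (2*(ν-1)+1) (2*(N-ν)+1) ha hb hppos hp1
      have hcast1 : ((2*(ν-1)+1 : ℕ):ℝ) = 2*(ν:ℝ)-1 := by
        push_cast [Nat.cast_sub hν1]; ring
      have hcast2 : ((2*(N-ν)+1 : ℕ):ℝ) = 2*(N:ℝ)-2*(ν:ℝ)+1 := by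
        push_cast [Nat.cast_sub hνN]; ring
      rw [hcast1, hcast2] at hpp
      have hden : 2*(ν:ℝ)-1+(2*(N:ℝ)-2*(ν:ℝ)+1) = 2*(N:ℝ) := by ring
      rw [hden] at hpp
      rw [← hανdef, ← hβνdef, ← hq1p] at hpp
      calc (p^(ν-1))^2 * (q^(N-ν))^2 * (p*q)
          = p^(2*(ν-1)+1) * q^(2*(N-ν)+1) := by ring
        _ ≤ αν^(2*(ν-1)+1) * βν^(2*(N-ν)+1) := hpp
        _ = (αν^(ν-1))^2 * (βν^(N-ν))^2 * (αν*βν) := by ring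
    calc p^(ν-1) * q^(N-ν) * Real.sqrt (p*q)
        = Real.sqrt ((p^(ν-1) * q^(N-ν) * Real.sqrt (p*q))^2) := (Real.sqrt_sq hL0).symm
      _ ≤ Real.sqrt ((αν^(ν-1) * βν^(N-ν) * Real.sqrt (αν*βν))^2) := Real.sqrt_le_sqrt hsq
      _ = αν^(ν-1) * βν^(N-ν) * Real.sqrt (αν*βν) := Real.sqrt_sq hR0
  have hTν : Tstar N σ ν = σ * ((ν:ℝ)*C) * (αν^(ν-1) * βν^(N-ν) * Real.sqrt (αν*βν)) := by
    unfold Tstar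
    rw [← hανdef, ← hβνdef]
    have hchoose : (N:ℝ) * ((N-1).choose (ν-1) : ℝ) = (ν:ℝ) * C := by
      have h := Nat.add_one_mul_choose_eq (N-1) (ν-1)
      have h1 : N - 1 + 1 = N := by omega
      have h2 : ν - 1 + 1 = ν := by omega
      rw [h1, h2] at h
      have h3 : ((N * (N-1).choose (ν-1) : ℕ):ℝ) = ((N.choose ν * ν : ℕ):ℝ) := by
        exact_mod_cast congrArg (Nat.cast : ℕ → ℝ) h
      push_cast at h3
      rw [hCdef]
      linarith
    calc (N:ℝ) * σ * ((N-1).choose (ν-1) : ℝ) * αν^(ν-1) * βν^(N-ν) * Real.sqrt (αν*βν)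
        = σ * ((N:ℝ) * ((N-1).choose (ν-1) : ℝ)) * (αν^(ν-1) * βν^(N-ν) * Real.sqrt (αν*βν)) := by
          ring
      _ = σ * ((ν:ℝ)*C) * (αν^(ν-1) * βν^(N-ν) * Real.sqrt (αν*βν)) := by rw [hchoose]
  calc σ * ((ν:ℝ)*C) * (p^(ν-1) * q^(N-ν) * Real.sqrt (p*q))
      ≤ σ * ((ν:ℝ)*C) * (αν^(ν-1) * βν^(N-ν) * Real.sqrt (αν*βν)) := by
        apply mul_le_mul_of_nonneg_left hkey
        have hC0 : (0:ℝ) ≤ C := by rw [hCdef]; exact Nat.cast_nonneg _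
        have hν0' : (0:ℝ) ≤ (ν:ℝ) := Nat.cast_nonneg _
        exact mul_nonneg hσ.le (mul_nonneg hν0' hC0)
    _ = Tstar N σ ν := hTν.symm
    _ ≤ Tstar N σ 1 := Tstar_le_one N hN σ hσ.le ν hν1 hνN


end ProbAux

end Aux

/-- With zero mean, `max_k T*(k) = T*(1) = T*(N) = Nσ(1 - 1/(2N))^{N-1}·√((1/(2N))(1 - 1/(2N)))`;
consequently, for a sum of i.i.d. two-point random variables with mean `0` and
variance `σ²`, `E[ξ⁺]` is at most this value. -/
theorem Tstar_max_and_expected_loss_bound {Ω : Type*} [MeasureSpace Ω]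
    [IsProbabilityMeasure (ℙ : Measure Ω)]
    (N : ℕ) (hN : 1 ≤ N) (σ : ℝ) (hσ : 0 < σ)
    (X : Fin N → Ω → ℝ) (L H : ℝ) (hL : L ≤ 0) (hH : 0 < H)
    (hmeas : ∀ n, Measurable (X n))
    (htwo : ∀ n, ∀ ω, X n ω = L ∨ X n ω = H)
    (hindep : iIndepFun X ℙ)
    (hident : ∀ n m, IdentDistrib (X n) (X m) ℙ ℙ)
    (hmean : ∀ n, ∫ ω, X n ω ∂ℙ = 0)
    (hvar : ∀ n, variance (X n) ℙ = σ ^ 2) :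
    (∀ k : ℕ, 1 ≤ k → k ≤ N → Tstar N σ k ≤ Tstar N σ 1)
      ∧ Tstar N σ 1 = Tstar N σ N
      ∧ Tstar N σ 1
          = N * σ * (1 - 1 / (2 * N)) ^ (N - 1) *
              Real.sqrt ((1 / (2 * N)) * (1 - 1 / (2 * N)))
      ∧ ∫ ω, max (∑ n, X n ω) 0 ∂ℙ
          ≤ N * σ * (1 - 1 / (2 * N)) ^ (N - 1) *
              Real.sqrt ((1 / (2 * N)) * (1 - 1 / (2 * N))) := by
  refine ⟨fun k hk1 hkN => Tstar_le_one N hN σ hσ.le k hk1 hkN, Tstar_N_eq N hN σ,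
    Tstar_one_eq N hN σ, ?_⟩
  rw [← Tstar_one_eq N hN σ]
  exact expected_loss_le N hN σ hσ X L H hL hH hmeas htwo hindep hident hmean hvar
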